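/- There exists a finitely additive probability Q on 𝒫({0,1}^ℕ) under which the coordinate process (pₙ) is a Bernoulli(p) sequence — i.e., Q{p₁=e₁,...,p_N=e_N} = p^{Σeᵢ}(1−p)^{N−Σeᵢ} for all N and all (e₁,...,e_N) ∈ {0,1}^N — and yet Q assigns probability 1 to the set Ω₁ of sequences that are eventually 0, so the empirical frequencies fₙ = (1/n)Σ_{j≤n} pⱼ converge to 0 (not to p) on a set of Q-probability 1. -/
import Mathlib
open Filter Topology MeasureTheory

noncomputable section BFA

/-- Bernoulli measure on Bool. -/
def bmu (p : ℝ) : Measure Bool :=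
  (ENNReal.ofReal p) • Measure.dirac true + (ENNReal.ofReal (1-p)) • Measure.dirac false

def bext (n : ℕ) (b : Fin n → Bool) : ℕ → Bool := fun j => if h : j < n then b ⟨j, h⟩ else false

def Qn (p : ℝ) (n : ℕ) (A : Set (ℕ → Bool)) : ℝ :=
  ((Measure.pi fun _ : Fin n => bmu p) (bext n ⁻¹' A)).toReal

instance bmu_fin (p : ℝ) : IsFiniteMeasure (bmu p) := by
  constructor
  simp only [bmu, Measure.coe_add, Measure.coe_smul, Pi.add_apply, Pi.smul_apply, smul_eq_mul]
  exact ENNReal.add_lt_top.2 ⟨ENNReal.mul_lt_top ENNReal.ofReal_lt_top (by simp),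
    ENNReal.mul_lt_top ENNReal.ofReal_lt_top (by simp)⟩

lemma bmu_true (p : ℝ) : bmu p {true} = ENNReal.ofReal p := by
  simp [bmu, Measure.dirac_apply]
lemma bmu_false (p : ℝ) : bmu p {false} = ENNReal.ofReal (1-p) := by
  simp [bmu, Measure.dirac_apply]
lemma bmu_univ (p : ℝ) (hp0 : 0 ≤ p) (hp1 : p ≤ 1) : bmu p Set.univ = 1 := by
  simp [bmu]
  rw [← ENNReal.ofReal_add hp0 (by linarith)]
  norm_num

lemma measSet {n : ℕ} (s : Set (Fin n → Bool)) : MeasurableSet s :=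
  (Set.toFinite s).measurableSet

lemma Qn_univ (p : ℝ) (hp0 : 0 ≤ p) (hp1 : p ≤ 1) (n : ℕ) : Qn p n Set.univ = 1 := by
  unfold Qn
  rw [Set.preimage_univ, Measure.pi_univ, Finset.prod_const, bmu_univ p hp0 hp1, one_pow,
    ENNReal.toReal_one]


lemma Qn_nonneg (p : ℝ) (n : ℕ) (A : Set (ℕ → Bool)) : 0 ≤ Qn p n A := ENNReal.toReal_nonneg

lemma Qn_le_one (p : ℝ) (hp0 : 0 ≤ p) (hp1 : p ≤ 1) (n : ℕ) (A : Set (ℕ → Bool)) :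
    Qn p n A ≤ 1 := by
  have h1 := Qn_univ p hp0 hp1 n
  have : Qn p n A ≤ Qn p n Set.univ :=
    ENNReal.toReal_mono (measure_ne_top _ _) (measure_mono (Set.subset_univ _))
  linarith

lemma Qn_add (p : ℝ) (n : ℕ) {A B : Set (ℕ → Bool)} (hAB : Disjoint A B) :
    Qn p n (A ∪ B) = Qn p n A + Qn p n B := by
  unfold Qn
  rw [Set.preimage_union, measure_union (hAB.preimage _) (measSet _),
    ENNReal.toReal_add (measure_ne_top _ _) (measure_ne_top _ _)]

lemma Qn_eventually (p : ℝ) (hp0 : 0 ≤ p) (hp1 : p ≤ 1) (n : ℕ) :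
    Qn p n {d | ∀ᶠ j in atTop, d j = false} = 1 := by
  have : bext n ⁻¹' {d | ∀ᶠ j in atTop, d j = false} = Set.univ := by
    ext b
    simp only [Set.mem_preimage, Set.mem_setOf_eq, Set.mem_univ, iff_true]
    refine eventually_atTop.2 ⟨n, fun j hj => ?_⟩
    simp [bext, Nat.not_lt.2 hj]
  have h := Qn_univ p hp0 hp1 n
  unfold Qn at *
  rw [this]
  rw [Set.preimage_univ] at h
  exact h

lemma Qn_cyl (p : ℝ) (hp0 : 0 ≤ p) (hp1 : p ≤ 1) (N : ℕ) (e : Fin N → Bool) {n : ℕ}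
    (hn : N ≤ n) :
    Qn p n {d | ∀ i : Fin N, d ↑i = e i}
      = p ^ (Finset.univ.filter fun i : Fin N => e i = true).card
        * (1 - p) ^ (N - (Finset.univ.filter fun i : Fin N => e i = true).card) := by
  classical
  set s : ℕ → Set Bool := fun j => if h : j < N then {e ⟨j, h⟩} else Set.univ with hs
  have hpre : bext n ⁻¹' {d | ∀ i : Fin N, d ↑i = e i}
      = Set.pi Set.univ (fun j : Fin n => s j.val) := by
    ext b
    simp only [Set.mem_preimage, Set.mem_setOf_eq, Set.mem_pi, Set.mem_univ, forall_true_left]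
    constructor
    · intro h j
      by_cases hj : (j : ℕ) < N
      · have h2 := h ⟨j, hj⟩
        simp only [bext] at h2
        rw [dif_pos (lt_of_lt_of_le hj hn)] at h2
        simp only [hs, dif_pos hj, Set.mem_singleton_iff]
        rw [← h2]
      · simp [hs, hj]
    · intro h i
      have hiN : (i : ℕ) < n := lt_of_lt_of_le i.isLt hn
      have h2 := h ⟨i, hiN⟩
      simp only [hs, dif_pos i.isLt, Set.mem_singleton_iff] at h2
      simp only [bext, dif_pos hiN]
      rw [h2]
  unfold Qn
  rw [hpre, Measure.pi_pi]
  have h1 : ∏ j : Fin n, bmu p (s j.val) = ∏ j ∈ Finset.range n, bmu p (s j) :=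
    Fin.prod_univ_eq_prod_range (fun j => bmu p (s j)) n
  have h2 : ∏ j ∈ Finset.Ico N n, bmu p (s j) = 1 := by
    apply Finset.prod_eq_one
    intro j hj
    have hjN : ¬ j < N := Nat.not_lt.2 (Finset.mem_Ico.1 hj).1
    show bmu p (s j) = 1
    rw [hs]
    simp only [dif_neg hjN]
    exact bmu_univ p hp0 hp1
  have h3 : ∏ j ∈ Finset.range n, bmu p (s j) = ∏ j ∈ Finset.range N, bmu p (s j) := by
    rw [← Finset.prod_range_mul_prod_Ico (fun j => bmu p (s j)) hn, h2, mul_one]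
  have h4 : ∏ j ∈ Finset.range N, bmu p (s j) = ∏ i : Fin N, bmu p {e i} := by
    rw [← Fin.prod_univ_eq_prod_range (fun j => bmu p (s j)) N]
    apply Finset.prod_congr rfl
    intro i _
    congr 1
    simp [hs, i.isLt]
  rw [h1, h3, h4, ENNReal.toReal_prod]
  have h5 : ∀ i : Fin N, (bmu p {e i}).toReal = if e i = true then p else 1 - p := by
    intro i
    cases hei : e i
    · simp [bmu_false, ENNReal.toReal_ofReal (by linarith : (0:ℝ) ≤ 1 - p)]
    · simp [bmu_true, ENNReal.toReal_ofReal hp0]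
  calc ∏ i : Fin N, (bmu p {e i}).toReal
      = ∏ i : Fin N, (if e i = true then p else 1 - p) := Finset.prod_congr rfl fun i _ => h5 i
    _ = p ^ (Finset.univ.filter fun i : Fin N => e i = true).card
        * (1 - p) ^ (N - (Finset.univ.filter fun i : Fin N => e i = true).card) := by
        rw [Finset.prod_ite, Finset.prod_const, Finset.prod_const]
        have hA := Finset.card_filter_add_card_filter_not
          (s := (Finset.univ : Finset (Fin N))) (p := fun i => e i = true)
        have hB : (Finset.univ : Finset (Fin N)).card = N := by simp
        have hC : N - (Finset.univ.filter fun i : Fin N => e i = true).card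
            = (Finset.univ.filter fun i : Fin N => ¬ e i = true).card := by omega
        rw [hC]

end BFA

theorem bernoulli_fa_law_with_frequencies_to_zero (p : ℝ) (hp0 : 0 < p) (hp1 : p < 1) :
    ∃ Q : Set (ℕ → Bool) → ℝ,
      (∀ A, 0 ≤ Q A) ∧
      Q Set.univ = 1 ∧
      (∀ A B : Set (ℕ → Bool), Disjoint A B → Q (A ∪ B) = Q A + Q B) ∧
      -- Bernoulli(p) finite-dimensional distributions
      (∀ (N : ℕ) (e : Fin N → Bool),
        Q {d | ∀ i : Fin N, d i = e i}
          = p ^ (Finset.univ.filter fun i : Fin N => e i = true).card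
            * (1 - p) ^ (N - (Finset.univ.filter fun i : Fin N => e i = true).card)) ∧
      -- yet the set of eventually-0 sequences has probability one
      Q {d | ∀ᶠ j in atTop, d j = false} = 1 ∧
      -- and on that set the empirical frequencies converge to 0, not to p
      (∀ d : ℕ → Bool, (∀ᶠ j in atTop, d j = false) →
        Tendsto
          (fun n => (∑ j ∈ Finset.range n, if d j = true then (1 : ℝ) else 0) / n)
          atTop (nhds 0)) := by
  have hp0' : 0 ≤ p := hp0.le
  have hp1' : p ≤ 1 := hp1.le
  have hex : ∀ A : Set (ℕ → Bool), ∃ a, a ∈ Set.Icc (0:ℝ) 1 ∧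
      Tendsto (fun n => Qn p n A) (hyperfilter ℕ : Filter ℕ) (𝓝 a) := by
    intro A
    have hmem : (↑((hyperfilter ℕ).map (fun n => Qn p n A)) : Filter ℝ)
        ≤ 𝓟 (Set.Icc (0:ℝ) 1) := by
      refine le_principal_iff.2 (mem_map.2 ?_)
      have : (fun n => Qn p n A) ⁻¹' Set.Icc 0 1 = Set.univ :=
        Set.eq_univ_of_forall fun n => ⟨Qn_nonneg p n A, Qn_le_one p hp0' hp1' n A⟩
      rw [this]
      exact univ_mem
    obtain ⟨a, ha, hle⟩ := (isCompact_Icc (a := (0:ℝ)) (b := 1)).ultrafilter_le_nhds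
      ((hyperfilter ℕ).map (fun n => Qn p n A)) hmem
    exact ⟨a, ha, hle⟩
  choose Q hQ using hex
  refine ⟨Q, fun A => (hQ A).1.1, ?_, ?_, ?_, ?_, ?_⟩
  · -- univ
    refine tendsto_nhds_unique (hQ Set.univ).2 ?_
    have : (fun n => Qn p n Set.univ) = fun _ => (1:ℝ) := funext fun n => Qn_univ p hp0' hp1' n
    rw [this]
    exact tendsto_const_nhds
  · -- additivity
    intro A B hAB
    refine tendsto_nhds_unique (hQ (A ∪ B)).2 ?_
    exact (((hQ A).2.add (hQ B).2).congr fun n => (Qn_add p n hAB).symm)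
  · -- Bernoulli
    intro N e
    refine tendsto_nhds_unique (hQ _).2 ?_
    have hev' : ∀ᶠ n in cofinite, Qn p n {d | ∀ i : Fin N, d ↑i = e i}
        = p ^ (Finset.univ.filter fun i : Fin N => e i = true).card
          * (1 - p) ^ (N - (Finset.univ.filter fun i : Fin N => e i = true).card) := by
      rw [Nat.cofinite_eq_atTop]
      filter_upwards [eventually_ge_atTop N] with n hn
      exact Qn_cyl p hp0' hp1' N e hn
    have hev := hev'.filter_mono (hyperfilter_le_cofinite)
    exact (tendsto_const_nhds.congr' (hev.mono fun n h => h.symm))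
  · -- eventually zero set
    refine tendsto_nhds_unique (hQ _).2 ?_
    have : (fun n => Qn p n {d | ∀ᶠ j in atTop, d j = false}) = fun _ => (1:ℝ) :=
      funext fun n => Qn_eventually p hp0' hp1' n
    rw [this]
    exact tendsto_const_nhds
  · -- frequencies to zero
    intro d hd
    obtain ⟨M, hM⟩ := eventually_atTop.1 hd
    set C : ℝ := ∑ j ∈ Finset.range M, (if d j = true then (1:ℝ) else 0) with hC
    have hev : ∀ᶠ n : ℕ in atTop,
        C / (n:ℝ) = (∑ j ∈ Finset.range n, if d j = true then (1:ℝ) else 0) / n := by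
      filter_upwards [eventually_ge_atTop M] with n hn
      congr 1
      refine Finset.sum_subset (Finset.range_subset_range.2 hn) ?_
      intro j hj hj'
      have : M ≤ j := Nat.le_of_not_lt (fun h => hj' (Finset.mem_range.2 h))
      simp [hM j this]
    exact (tendsto_const_div_atTop_nhds_zero_nat C).congr' hev
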